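/- Let f be a polynomial with complex coefficients, let r ∈ ℂ be a simple root of f (i.e. f(r) = 0 and f'(r) ≠ 0), and let α ∈ ℂ. Define g : ℂ → ℂ by g(z) = z − (1 + L(z)/(2·(1 − α·L(z))))·f(z)/f'(z), where L(z) = f(z)·f''(z)/f'(z)². Then g(r) = r, the derivative of g at r is 0, and the second derivative of g at r is 0. (Every simple root of a polynomial is a super-attracting fixed point of local degree at least 3 of the Chebyshev–Halley method; the methods have cubic convergence.) -/

import Mathlib

private theorem aux_ch (z p a q α : ℂ) (ha : a ≠ 0) (h : a*a - α*(p*q) ≠ 0) :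
    z - (1 + (p*q/a^2)/(2*(1 - α*(p*q/a^2))))*(p/a)
      = z - (p*(2*(a*a) - (2*α-1)*(p*q)))/(2*a*(a*a - α*(p*q))) := by
  have ha2 : a^2 ≠ 0 := pow_ne_zero 2 ha
  have e1 : 1 - α*(p*q/a^2) = (a*a - α*(p*q))/a^2 := by
    field_simp
  rw [e1]
  have e2 : (p*q/a^2) / (2*((a*a - α*(p*q))/a^2)) = p*q/(2*(a*a - α*(p*q))) := by
    rw [div_eq_div_iff (mul_ne_zero two_ne_zero (div_ne_zero h ha2))
      (mul_ne_zero two_ne_zero h)]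
    field_simp
  rw [e2]
  field_simp [ha, h]
  have hX : (a^2 - p*q*α) * (a^2 - p*q*α)⁻¹ = 1 :=
    mul_inv_cancel₀ (by intro h0; apply h; linear_combination h0)
  linear_combination (2*p) * hX

set_option maxHeartbeats 1000000 in
theorem stmt_1 (f : Polynomial ℂ) (r : ℂ) (hr : f.eval r = 0)
    (hr' : f.derivative.eval r ≠ 0) (α : ℂ)
    (L : ℂ → ℂ)
    (hL : ∀ z, L z = f.eval z * f.derivative.derivative.eval z / (f.derivative.eval z)^2)
    (g : ℂ → ℂ)
    (hg : ∀ z, g z = z - (1 + L z / (2*(1 - α * L z))) * (f.eval z / f.derivative.eval z)) :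
    g r = r ∧ deriv g r = 0 ∧ iteratedDeriv 2 g r = 0 := by
  set A : Polynomial ℂ :=
    f * (Polynomial.C 2 * (f.derivative * f.derivative)
      - Polynomial.C (2 * α - 1) * f * f.derivative.derivative) with hA
  set B : Polynomial ℂ :=
    Polynomial.C 2 * f.derivative *
      (f.derivative * f.derivative - Polynomial.C α * f * f.derivative.derivative) with hB
  have hBr : B.eval r ≠ 0 := by
    simp only [hB, Polynomial.eval_mul, Polynomial.eval_sub, Polynomial.eval_C, hr]
    intro h
    rcases mul_eq_zero.mp h with h | h
    · rcases mul_eq_zero.mp h with h | h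
      · exact two_ne_zero h
      · exact hr' h
    · exact hr' (mul_self_eq_zero.mp (by linear_combination h))
  have hopen : IsOpen {z : ℂ | B.eval z ≠ 0} :=
    isOpen_compl_singleton.preimage B.continuous
  have key : ∀ z : ℂ, B.eval z ≠ 0 → g z = z - A.eval z / B.eval z := by
    intro z hz
    have hz1 : f.derivative.eval z ≠ 0 := by
      intro h
      apply hz
      simp [hB, h]
    have hz2 : f.derivative.eval z * f.derivative.eval z
        - α * (f.eval z * f.derivative.derivative.eval z) ≠ 0 := by
      intro h
      apply hz
      simp only [hB, Polynomial.eval_mul, Polynomial.eval_sub, Polynomial.eval_C]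
      rw [show Polynomial.eval z f.derivative * Polynomial.eval z f.derivative -
        α * Polynomial.eval z f * Polynomial.eval z f.derivative.derivative = 0 by
        linear_combination h]
      ring
    have eA : A.eval z = f.eval z * (2*(f.derivative.eval z * f.derivative.eval z)
        - (2*α-1)*(f.eval z * f.derivative.derivative.eval z)) := by
      simp only [hA, Polynomial.eval_mul, Polynomial.eval_sub, Polynomial.eval_C]
      ring
    have eB : B.eval z = 2 * f.derivative.eval z * (f.derivative.eval z * f.derivative.eval z
        - α * (f.eval z * f.derivative.derivative.eval z)) := by
      simp only [hB, Polynomial.eval_mul, Polynomial.eval_sub, Polynomial.eval_C]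
      ring
    rw [hg, hL, eA, eB]
    exact aux_ch z (f.eval z) (f.derivative.eval z) (f.derivative.derivative.eval z) α hz1 hz2
  have hgeq : g =ᶠ[nhds r] fun z => z - A.eval z / B.eval z :=
    (hopen.eventually_mem hBr).mono fun z hz => key z hz
  refine ⟨?_, ?_, ?_⟩
  · rw [hg, hL, hr]; simp
  · rw [hgeq.deriv_eq]
    rw [deriv_fun_sub differentiableAt_fun_id ((A.differentiableAt).fun_div (B.differentiableAt) hBr)]
    rw [deriv_fun_div A.differentiableAt B.differentiableAt hBr]
    rw [Polynomial.deriv, Polynomial.deriv, deriv_id'']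
    simp only [hA, hB, Polynomial.derivative_mul, Polynomial.derivative_C, Polynomial.derivative_add,
      Polynomial.derivative_sub, Polynomial.eval_mul,
      Polynomial.eval_sub, Polynomial.eval_add, Polynomial.eval_C, hr,
      mul_zero, zero_mul, sub_zero, zero_sub, add_zero, zero_add, neg_zero]
    field_simp
    ring
  · rw [iteratedDeriv_succ, iteratedDeriv_one]
    have hd : deriv g =ᶠ[nhds r] fun z =>
        1 - (A.derivative.eval z * B.eval z - A.eval z * B.derivative.eval z)
          / (B.eval z) ^ 2 := by
      filter_upwards [hopen.eventually_mem hBr] with z hz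
      have hzB : B.eval z ≠ 0 := hz
      have hloc : g =ᶠ[nhds z] fun w => w - A.eval w / B.eval w :=
        (hopen.eventually_mem hz).mono fun w hw => key w hw
      rw [hloc.deriv_eq,
        deriv_fun_sub differentiableAt_fun_id ((A.differentiableAt).fun_div (B.differentiableAt) hzB),
        deriv_fun_div A.differentiableAt B.differentiableAt hzB,
        Polynomial.deriv, Polynomial.deriv, deriv_id'']
    rw [hd.deriv_eq]
    have hAd : DifferentiableAt ℂ (fun z => Polynomial.eval z A.derivative * Polynomial.eval z B
        - Polynomial.eval z A * Polynomial.eval z B.derivative) r :=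
      ((A.derivative.differentiableAt).mul B.differentiableAt).sub
        ((A.differentiableAt).mul B.derivative.differentiableAt)
    have hBd : DifferentiableAt ℂ (fun z => (Polynomial.eval z B) ^ 2) r :=
      (B.differentiableAt).pow 2
    have hB2 : (B.eval r) ^ 2 ≠ 0 := pow_ne_zero 2 hBr
    rw [deriv_fun_sub (differentiableAt_const 1) (hAd.fun_div hBd hB2),
      deriv_fun_div hAd hBd hB2, deriv_const]
    rw [deriv_fun_sub ((A.derivative.differentiableAt).fun_mul B.differentiableAt)
        ((A.differentiableAt).fun_mul B.derivative.differentiableAt),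
      deriv_fun_mul A.derivative.differentiableAt B.differentiableAt,
      deriv_fun_mul A.differentiableAt B.derivative.differentiableAt,
      deriv_fun_pow B.differentiableAt 2,
      Polynomial.deriv, Polynomial.deriv, Polynomial.deriv, Polynomial.deriv]
    simp only [hA, hB, Polynomial.derivative_mul, Polynomial.derivative_C, Polynomial.derivative_add,
      Polynomial.derivative_sub, Polynomial.eval_mul,
      Polynomial.eval_sub, Polynomial.eval_add, Polynomial.eval_C, hr,
      mul_zero, zero_mul, sub_zero, zero_sub, add_zero, zero_add, neg_zero]
    field_simp
    ring
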